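/- Let A be a local ring with residue field k and let P^{-1} → P^0 → P^1 be a complex of finite free A-modules such that the cohomology at the middle spot of the base-changed complex P⊗k vanishes. Then there is a direct sum decomposition P^0 = I ⊕ K of finite free A-modules such that the map P^{-1} → P^0 factors through a surjection P^{-1} ↠ I and the map P^0 → P^1 restricts to an injection K ↪ P^1. -/

import Mathlib

/-- Let `A` be a local ring with residue field `k` and
`P⁻¹ → P⁰ → P¹` a complex of finite free `A`-modules whose middle cohomology
vanishes after base change to `k`.  Then `P⁰` decomposes as a direct sum
`I ⊕ K` of finite free submodules such that `P⁻¹ → P⁰` factors through a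
surjection onto `I` (i.e. `I` is the image of `d⁻¹`) and `P⁰ → P¹` restricts
to an injection on `K`. -/
theorem stmt0 {A : Type*} [CommRing A] [IsLocalRing A]
    {Pneg P0 P1 : Type*}
    [AddCommGroup Pneg] [Module A Pneg] [Module.Free A Pneg] [Module.Finite A Pneg]
    [AddCommGroup P0] [Module A P0] [Module.Free A P0] [Module.Finite A P0]
    [AddCommGroup P1] [Module A P1] [Module.Free A P1] [Module.Finite A P1]
    (dneg : Pneg →ₗ[A] P0) (d0 : P0 →ₗ[A] P1)
    (hcomplex : d0 ∘ₗ dneg = 0)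
    (hH0 : ∀ x ∈ LinearMap.ker
        (LinearMap.baseChange (IsLocalRing.ResidueField A) d0),
      x ∈ LinearMap.range
        (LinearMap.baseChange (IsLocalRing.ResidueField A) dneg)) :
    ∃ I K : Submodule A P0, IsCompl I K ∧
      Module.Free A I ∧ Module.Finite A I ∧
      Module.Free A K ∧ Module.Finite A K ∧
      LinearMap.range dneg = I ∧
      (∀ x ∈ K, d0 x = 0 → x = 0) := by
  classical
  set k := IsLocalRing.ResidueField A
  set J : Submodule A P0 := LinearMap.range dneg with hJ
  have hle : J ≤ LinearMap.ker d0 := by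
    rintro _ ⟨y, rfl⟩
    simpa using LinearMap.congr_fun hcomplex y
  -- the induced map on the quotient
  set f : (P0 ⧸ J) →ₗ[A] P1 := J.liftQ d0 hle with hf
  have hfmk : f ∘ₗ J.mkQ = d0 := J.liftQ_mkQ d0 hle
  -- exactness of Pneg → P0 → P0/J → 0
  have hexact : Function.Exact dneg J.mkQ := dneg.exact_map_mkQ_range
  have hmkQsurj : Function.Surjective J.mkQ := Submodule.mkQ_surjective J
  -- `f ⊗ k` is injective
  have hfinj : Function.Injective (f.lTensor k) := by
    rw [injective_iff_map_eq_zero]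
    intro x hx
    obtain ⟨y, rfl⟩ := LinearMap.lTensor_surjective k hmkQsurj x
    have hd0y : (d0.lTensor k) y = 0 := by
      rw [← hfmk, LinearMap.lTensor_comp, LinearMap.comp_apply, hx]
    have hy : y ∈ LinearMap.range (LinearMap.baseChange k dneg) := by
      apply hH0
      rw [LinearMap.mem_ker]
      have := congrFun (LinearMap.baseChange_eq_ltensor (A := k) (f := d0)) y
      rw [show (LinearMap.baseChange k d0) y = (d0.lTensor k) y from this]
      exact hd0y
    obtain ⟨z, hz⟩ := hy
    have hz' : (dneg.lTensor k) z = y := by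
      have := congrFun (LinearMap.baseChange_eq_ltensor (A := k) (f := dneg)) z
      rw [← this, hz]
    rw [← hz', ← LinearMap.comp_apply, ← LinearMap.lTensor_comp,
      hexact.linearMap_comp_eq_zero]
    simp
  -- `f` is a split injection
  obtain ⟨f', hf'⟩ :=
    (IsLocalRing.split_injective_iff_lTensor_residueField_injective f).mpr hfinj
  have hfinj' : Function.Injective f :=
    Function.HasLeftInverse.injective ⟨f', LinearMap.congr_fun hf'⟩
  -- `P0 ⧸ J` is projective, hence we get a section of `mkQ`
  have hproj : Module.Projective A (P0 ⧸ J) := Module.Projective.of_split f f' hf'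
  obtain ⟨s, hs⟩ : ∃ s : (P0 ⧸ J) →ₗ[A] P0, J.mkQ ∘ₗ s = LinearMap.id :=
    Module.projective_lifting_property J.mkQ LinearMap.id hmkQsurj
  have hsinj : Function.Injective s :=
    Function.HasLeftInverse.injective ⟨J.mkQ, LinearMap.congr_fun hs⟩
  set K : Submodule A P0 := LinearMap.range s with hK
  -- complementarity
  have hcompl : IsCompl J K := by
    constructor
    · rw [disjoint_iff_inf_le]
      rintro x ⟨hxJ, y, rfl⟩
      have : J.mkQ (s y) = 0 := by
        rwa [← LinearMap.mem_ker, Submodule.ker_mkQ]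
      rw [← LinearMap.comp_apply, hs] at this
      simp only [LinearMap.id_apply] at this
      simp [this]
    · rw [codisjoint_iff_le_sup]
      intro x _
      have h0 : J.mkQ (x - s (J.mkQ x)) = 0 := by
        rw [map_sub, ← LinearMap.comp_apply, hs]
        simp
      have hx1 : x - s (J.mkQ x) ∈ J :=
        (Submodule.Quotient.mk_eq_zero J).mp (by simpa using h0)
      have hx2 : s (J.mkQ x) ∈ K := ⟨J.mkQ x, rfl⟩
      simpa using Submodule.add_mem_sup hx1 hx2
  -- K is free and finite (isomorphic to P0 ⧸ J)
  have hKequiv : (P0 ⧸ J) ≃ₗ[A] K := LinearEquiv.ofInjective s hsinj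
  have hKfree : Module.Free A K := by
    have : Module.Finite A (P0 ⧸ J) := Module.Finite.quotient A J
    have : Module.FinitePresentation A (P0 ⧸ J) :=
      Module.finitePresentation_of_projective A (P0 ⧸ J)
    have : Module.Free A (P0 ⧸ J) := Module.free_of_flat_of_isLocalRing
    exact Module.Free.of_equiv hKequiv
  have hKfin : Module.Finite A K := by
    have : Module.Finite A (P0 ⧸ J) := Module.Finite.quotient A J
    exact Module.Finite.equiv hKequiv
  -- I = J is free and finite
  have hJfin : Module.Finite A J := Module.Finite.range dneg
  have hJproj : Module.Projective A J := by
    refine Module.Projective.of_split J.subtype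
      (J.projectionOnto K hcompl) ?_
    ext x
    simp
  have hJfree : Module.Free A J := by
    have : Module.FinitePresentation A J := Module.finitePresentation_of_projective A J
    exact Module.free_of_flat_of_isLocalRing
  refine ⟨J, K, hcompl, hJfree, hJfin, hKfree, hKfin, rfl, ?_⟩
  -- d0 is injective on K
  rintro x ⟨y, rfl⟩ hd0x
  have : f (J.mkQ (s y)) = 0 := by
    rw [← LinearMap.comp_apply, hfmk] at *
    exact hd0x
  have hy : J.mkQ (s y) = 0 := by
    apply hfinj'
    simpa using this
  rw [← LinearMap.comp_apply, hs] at hy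
  simp only [LinearMap.id_apply] at hy
  simp [hy]
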